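/- Let m ≥ 2 and let v, w and v', w' be vectors in ℝ^m such that (v, w) is linearly independent and (v', w') is linearly independent. Then the following are equivalent: (1) there exists t₀ ∈ ℝ such that for every s ∈ ℝ, the vector cos(s + t₀)·v + sin(s + t₀)·w is a positive real multiple of cos(s)·v' + sin(s)·w'; (2) there exists a nonzero complex number λ with v' + i·w' = λ·(v + i·w) in ℂ^m (componentwise). In other words, the unit-speed parametrized curves γ_{(v,w)}(s) = [cos(s)·v + sin(s)·w]₊ and γ_{(v',w')}(s) = [cos(s)·v' + sin(s)·w']₊ in the space of rays parametrize the same oriented line with the same speed, up to a shift of parameter, if and only if [[v + i w]] = [[v' + i w']] as points of ℂℙ^{m−1} ∖ ℝℙ^{m−1}. -/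

import Mathlib

open Real Complex

lemma coeffs_eq {m : ℕ} {v w : Fin m → ℝ} (h : LinearIndependent ℝ ![v, w])
    {a b a' b' : ℝ} (e : a • v + b • w = a' • v + b' • w) : a = a' ∧ b = b' := by
  rw [LinearIndependent.pair_iff] at h
  have := h (a - a') (b - b') (by linear_combination (norm := module) e)
  constructor <;> linarith [this.1, this.2]

theorem same_oriented_line_iff_complex_line (m : ℕ) (hm : 2 ≤ m)
    (v w v' w' : Fin m → ℝ)
    (h : LinearIndependent ℝ ![v, w]) (h' : LinearIndependent ℝ ![v', w']) :
    (∃ t₀ : ℝ, ∀ s : ℝ, ∃ r : ℝ, 0 < r ∧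
        Real.cos (s + t₀) • v + Real.sin (s + t₀) • w
          = r • (Real.cos s • v' + Real.sin s • w')) ↔
      (∃ lam : ℂ, lam ≠ 0 ∧
        (fun j => (v' j : ℂ) + Complex.I * (w' j : ℂ))
          = lam • fun j => (v j : ℂ) + Complex.I * (w j : ℂ)) := by
  constructor
  · rintro ⟨t₀, hs⟩
    obtain ⟨r₀, hr₀, e₀⟩ := hs 0
    obtain ⟨r₁, hr₁, e₁⟩ := hs (π / 2)
    obtain ⟨r₂, hr₂, e₂⟩ := hs (π / 4)
    simp only [Real.cos_zero, Real.sin_zero, zero_add, one_smul, zero_smul, add_zero] at e₀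
    -- e₀ : cos t₀ • v + sin t₀ • w = r₀ • v'
    have ecos1 : Real.cos (π / 2 + t₀) = -Real.sin t₀ := by
      rw [Real.cos_add]; simp
    have esin1 : Real.sin (π / 2 + t₀) = Real.cos t₀ := by
      rw [Real.sin_add]; simp
    rw [ecos1, esin1, Real.cos_pi_div_two, Real.sin_pi_div_two, zero_smul, one_smul,
      zero_add] at e₁
    -- e₁ : (-sin t₀) • v + cos t₀ • w = r₁ • w'
    -- express v', w'
    have hr0c : (r₀⁻¹ * r₀) • v' = (1:ℝ) • v' := by
      rw [inv_mul_cancel₀ hr₀.ne']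
    have hr1c : (r₁⁻¹ * r₁) • w' = (1:ℝ) • w' := by
      rw [inv_mul_cancel₀ hr₁.ne']
    have hv' : v' = (r₀⁻¹ * Real.cos t₀) • v + (r₀⁻¹ * Real.sin t₀) • w := by
      linear_combination (norm := module) (-r₀⁻¹ : ℝ) • e₀ - hr0c
    have hw' : w' = (-(r₁⁻¹ * Real.sin t₀)) • v + (r₁⁻¹ * Real.cos t₀) • w := by
      linear_combination (norm := module) (-r₁⁻¹ : ℝ) • e₁ - hr1c
    -- use s = π/4 to show r₀ = r₁
    rw [hv', hw'] at e₂
    have c4 := Real.cos_pi_div_four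
    have s4 := Real.sin_pi_div_four
    have e2' : (Real.cos (π/4) * Real.cos t₀ - Real.sin (π/4) * Real.sin t₀) • v
        + (Real.sin (π/4) * Real.cos t₀ + Real.cos (π/4) * Real.sin t₀) • w
        = (r₂ * (Real.cos (π/4) * (r₀⁻¹ * Real.cos t₀)
            + Real.sin (π/4) * (-(r₁⁻¹ * Real.sin t₀)))) • v
          + (r₂ * (Real.cos (π/4) * (r₀⁻¹ * Real.sin t₀)
            + Real.sin (π/4) * (r₁⁻¹ * Real.cos t₀))) • w := by
      rw [← Real.cos_add, ← Real.sin_add, e₂]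
      module
    obtain ⟨q1, q2⟩ := coeffs_eq h e2'
    have pyth : Real.cos t₀ ^ 2 + Real.sin t₀ ^ 2 = 1 := by
      rw [add_comm]; exact Real.sin_sq_add_cos_sq t₀
    have hsqrt2 : Real.cos (π/4) = Real.sqrt 2 / 2 := c4
    have hc4pos : (0:ℝ) < Real.cos (π/4) := by rw [c4]; positivity
    have hr01 : r₀ = r₁ := by
      rw [c4, s4] at q1 q2
      have h2 : Real.sqrt 2 / 2 ≠ 0 := by positivity
      have k1' : Real.sqrt 2 / 2 * (r₂ * r₀⁻¹) = Real.sqrt 2 / 2 * 1 := by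
        linear_combination (-Real.cos t₀) * q1 + (-Real.sin t₀) * q2
          - (Real.sqrt 2 / 2 * (r₂ * r₀⁻¹ - 1)) * pyth
      have k2' : Real.sqrt 2 / 2 * (r₂ * r₁⁻¹) = Real.sqrt 2 / 2 * 1 := by
        linear_combination (Real.sin t₀) * q1 + (-Real.cos t₀) * q2
          - (Real.sqrt 2 / 2 * (r₂ * r₁⁻¹ - 1)) * pyth
      have k1 := mul_left_cancel₀ h2 k1'
      have k2 := mul_left_cancel₀ h2 k2'
      have e1 : r₂ = r₀ := by
        field_simp at k1; linarith
      have e2 : r₂ = r₁ := by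
        field_simp at k2; linarith
      rw [← e1, ← e2]
    -- construct lambda
    refine ⟨(↑(r₀⁻¹ * Real.cos t₀) : ℂ) - ↑(r₀⁻¹ * Real.sin t₀) * Complex.I, ?_, ?_⟩
    · intro hlz
      have hz : r₀⁻¹ * Real.cos t₀ = 0 ∧ r₀⁻¹ * Real.sin t₀ = 0 := by
        simpa [Complex.ext_iff, Complex.cos_ofReal_re, Complex.sin_ofReal_re] using hlz
      have hr0inv : r₀⁻¹ ≠ 0 := inv_ne_zero hr₀.ne'
      have hc := (mul_eq_zero.mp hz.1).resolve_left hr0inv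
      have hs0 := (mul_eq_zero.mp hz.2).resolve_left hr0inv
      rw [hc, hs0] at pyth
      norm_num at pyth
    · funext j
      have hv'j : v' j = (r₀⁻¹ * Real.cos t₀) * v j + (r₀⁻¹ * Real.sin t₀) * w j := by
        rw [hv']; simp [mul_comm]
      have hw'j : w' j = (r₀⁻¹ * Real.cos t₀) * w j - (r₀⁻¹ * Real.sin t₀) * v j := by
        rw [hw', hr01]; simp [mul_comm]; ring
      simp only [Pi.smul_apply, smul_eq_mul]
      rw [Complex.ext_iff]
      constructor
      · simp only [Complex.add_re, Complex.add_im, Complex.sub_re, Complex.sub_im,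
          Complex.mul_re, Complex.mul_im, Complex.ofReal_re, Complex.ofReal_im,
          Complex.I_re, Complex.I_im]
        linear_combination hv'j
      · simp only [Complex.add_re, Complex.add_im, Complex.sub_re, Complex.sub_im,
          Complex.mul_re, Complex.mul_im, Complex.ofReal_re, Complex.ofReal_im,
          Complex.I_re, Complex.I_im]
        linear_combination hw'j
  · rintro ⟨lam, hl, he⟩
    set a := lam.re
    set b := lam.im
    have hab : ∀ j, v' j = a * v j - b * w j ∧ w' j = b * v j + a * w j := by
      intro j
      have := congrFun he j
      simp only [Pi.smul_apply, smul_eq_mul] at this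
      rw [Complex.ext_iff] at this
      constructor
      · have := this.1
        simpa [Complex.mul_re] using this
      · have := this.2
        simpa [Complex.mul_im, add_comm] using this
    set R := ‖lam‖ with hR
    have hRpos : 0 < R := norm_pos_iff.mpr hl
    have hca : Real.cos (Complex.arg lam) = a / R := Complex.cos_arg hl
    have hsa : Real.sin (Complex.arg lam) = b / R := Complex.sin_arg lam
    refine ⟨-(Complex.arg lam), fun s => ⟨R⁻¹, by positivity, ?_⟩⟩
    funext j
    simp only [Pi.add_apply, Pi.smul_apply, smul_eq_mul]
    have h1 : s + -(Complex.arg lam) = s - Complex.arg lam := by ring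
    rw [h1, Real.cos_sub, Real.sin_sub, hca, hsa, (hab j).1, (hab j).2]
    field_simp
    ring
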